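/- Let A ⊆ B be an extension of integral domains with B flat as an A-module, such that both A and B are unique factorization domains with the same fraction field K(A) = K(B). If the unit groups satisfy A^× = B^×, then B ∩ K(A) = A, i.e., A = B. -/

import Mathlib

open TensorProduct

/-- Key flatness step: if `a'`, `b'` are relatively prime in a domain `A` with `a' ≠ 0`,
`B` is a flat `A`-algebra, and `x * b' = a'` in `B`, then `b'` becomes a unit in `B`. -/
lemma isUnit_den_of_flat {A B : Type*} [CommRing A] [IsDomain A] [CommRing B]
    [Algebra A B] (hflat : Module.Flat A B) (a' b' : A) (ha' : a' ≠ 0)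
    (hco : ∀ s : A, a' ∣ s * b' → a' ∣ s) (x : B)
    (hx : x * algebraMap A B b' = algebraMap A B a') :
    IsUnit (algebraMap A B b') := by
  classical
  -- the exact sequence A → A × A → A given by u ↦ (a'u, b'u) and (s,t) ↦ sb' - ta'
  set f : A →ₗ[A] A × A := LinearMap.toSpanSingleton A (A × A) (a', b') with hf
  set g : A × A →ₗ[A] A :=
    LinearMap.coprod (LinearMap.toSpanSingleton A A b')
      (LinearMap.toSpanSingleton A A (-a')) with hg
  have hexact : Function.Exact f g := by
    intro y
    constructor
    · intro hy
      obtain ⟨s, t⟩ := y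
      have h1 : s * b' - t * a' = 0 := by
        simpa [hg, smul_eq_mul, sub_eq_add_neg, mul_comm] using hy
      have h2 : s * b' = t * a' := by linear_combination h1
      have hdvd : a' ∣ s := hco s ⟨t, by linear_combination h2⟩
      obtain ⟨u, hu⟩ := hdvd
      have ht : t = b' * u := by
        have h3 : a' * t = a' * (b' * u) := by
          rw [hu] at h2; linear_combination -h2
        exact (mul_left_cancel₀ ha' h3)
      refine ⟨u, ?_⟩
      simp only [hf, LinearMap.toSpanSingleton_apply, Prod.smul_mk, smul_eq_mul,
        Prod.mk.injEq]
      constructor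
      · rw [hu]; ring
      · rw [ht]; ring
    · rintro ⟨u, rfl⟩
      simp [hf, hg, smul_eq_mul]; ring
  have hexactB : Function.Exact (f.lTensor B) (g.lTensor B) :=
    Module.Flat.lTensor_exact B hexact
  -- the element x ⊗ (1,0) + 1 ⊗ (0,1) is killed by g ⊗ 1
  set z : B ⊗[A] (A × A) := x ⊗ₜ ((1 : A), (0 : A)) + (1 : B) ⊗ₜ ((0 : A), (1 : A))
    with hz
  have hgz : g.lTensor B z = 0 := by
    apply (TensorProduct.rid A B).injective
    have : (TensorProduct.rid A B) (g.lTensor B z) =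
        x * algebraMap A B b' - algebraMap A B a' := by
      simp [hz, hg, smul_eq_mul, Algebra.smul_def, sub_eq_add_neg, mul_comm]
    rw [this, hx, sub_self, map_zero]
  obtain ⟨w, hw⟩ := (hexactB z).mp hgz
  -- write w = u ⊗ 1
  set u : B := (TensorProduct.rid A B) w with hu
  have hw1 : w = u ⊗ₜ (1 : A) := by
    have := (TensorProduct.rid A B).symm_apply_apply w
    rw [← this, hu, TensorProduct.rid_symm_apply]
  rw [hw1] at hw
  have hfw : f.lTensor B (u ⊗ₜ (1 : A)) = u ⊗ₜ (a', b') := by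
    simp [hf]
  rw [hfw] at hw
  -- compare second components under B ⊗ (A × A) ≃ (B ⊗ A) × (B ⊗ A)
  have hcomp := congrArg (TensorProduct.prodRight A A B A A) hw
  have hsnd := congrArg Prod.snd hcomp
  have hsnd' : (u ⊗ₜ b' : B ⊗[A] A) = (1 : B) ⊗ₜ (1 : A) := by
    simpa [hz, TensorProduct.tmul_zero] using hsnd
  have h1 : (1 : B) = u * algebraMap A B b' := by
    have := congrArg (TensorProduct.rid A B) hsnd'
    simpa [Algebra.smul_def, mul_comm] using this.symm
  exact IsUnit.of_mul_eq_one u (by rw [mul_comm, ← h1])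

/-- Let `A ⊆ B` be an extension of UFDs with `B` flat over `A`, having the same fraction
field `K(A) = K(B)`.  If `A^× = B^×`, then `B ∩ K(A) = A`, i.e. `A = B`. -/
theorem eq_of_flat_ufd_extension
    (A B : Type*) [CommRing A] [IsDomain A] [CommRing B] [IsDomain B]
    [UniqueFactorizationMonoid A] [UniqueFactorizationMonoid B]
    [Algebra A B] (hinj : Function.Injective (algebraMap A B))
    (hflat : Module.Flat A B)
    -- `K(A) = K(B)` : every element of `B` is a fraction of elements of `A`
    (hfrac : ∀ x : B, ∃ a b : A, b ≠ 0 ∧ x * algebraMap A B b = algebraMap A B a)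
    -- `A^× = B^×`
    (hunits : ∀ x : B, IsUnit x ↔ ∃ a : A, IsUnit a ∧ algebraMap A B a = x) :
    Function.Surjective (algebraMap A B) := by
  classical
  letI : NormalizationMonoid A := UniqueFactorizationMonoid.strongNormalizationMonoid.toNormalizationMonoid
  letI : GCDMonoid A := (UniqueFactorizationMonoid.toNormalizedGCDMonoid A).toGCDMonoid
  intro x
  obtain ⟨a, b, hb, hx⟩ := hfrac x
  obtain ⟨a', b', ea, eb, hco⟩ := extract_gcd a b
  have hg : gcd a b ≠ 0 := fun h => hb (by rw [eb, h, zero_mul])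
  have hb' : b' ≠ 0 := fun h => hb (by rw [eb, h, mul_zero])
  -- reduce to lowest terms: x * b' = a'
  have hx' : x * algebraMap A B b' = algebraMap A B a' := by
    have h0 : algebraMap A B (gcd a b) ≠ 0 := fun h =>
      hg (hinj (by rw [h, map_zero]))
    apply mul_right_cancel₀ h0
    have : x * algebraMap A B (gcd a b * b') = algebraMap A B (gcd a b * a') := by
      rw [← ea, ← eb]; exact hx
    rw [map_mul, map_mul] at this
    calc x * algebraMap A B b' * algebraMap A B (gcd a b)
        = x * (algebraMap A B (gcd a b) * algebraMap A B b') := by ring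
      _ = algebraMap A B (gcd a b) * algebraMap A B a' := this
      _ = algebraMap A B a' * algebraMap A B (gcd a b) := by ring
  -- b' becomes a unit in B
  have hbu : IsUnit (algebraMap A B b') := by
    by_cases ha' : a' = 0
    · subst ha'
      have : IsUnit b' := (gcd_zero_left' b').isUnit hco
      exact this.map (algebraMap A B)
    · refine isUnit_den_of_flat hflat a' b' ha' (fun s hs => ?_) x hx'
      exact (gcd_isUnit_iff_isRelPrime.mp hco).dvd_of_dvd_mul_right hs
  -- pull the unit back to A
  obtain ⟨c, hc, hcb⟩ := (hunits _).mp hbu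
  have hceq : c = b' := hinj hcb
  subst hceq
  obtain ⟨v, hv⟩ := hc
  refine ⟨a' * ↑v⁻¹, ?_⟩
  have hbne : algebraMap A B (↑v : A) ≠ 0 := fun h => by
    have : (↑v : A) = 0 := hinj (by rw [h, map_zero])
    exact (Units.ne_zero v) this
  apply mul_right_cancel₀ hbne
  rw [← map_mul]
  have : a' * ↑v⁻¹ * ↑v = a' := by
    rw [mul_assoc, Units.inv_mul, mul_one]
  rw [this, ← hx', hv]
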